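/- Strict comparison of Nehari levels: in the setting of the comparison lemma, if additionally u₀ ∈ N₂ attains c₂ (I₂(u₀) = c₂) and A₁(u₀) > A₂(u₀) strictly, then c₁ < c₂. -/
import Mathlib


/-- Strict comparison of Nehari levels: if in addition `u₀ ∈ N₂` attains `c₂` and
`A₁(u₀) > A₂(u₀)` strictly, then `c₁ < c₂`. -/
theorem stmt7 {H : Type*} [NormedAddCommGroup H] [InnerProductSpace ℝ H]
    (p : ℝ) (hp : 2 < p) (A₁ A₂ : H → ℝ) (hA₁ : Continuous A₁) (hA₂ : Continuous A₂)
    (hom₁ : ∀ (t : ℝ), 0 ≤ t → ∀ u : H, A₁ (t • u) = t ^ p * A₁ u)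
    (hom₂ : ∀ (t : ℝ), 0 ≤ t → ∀ u : H, A₂ (t • u) = t ^ p * A₂ u)
    (hle : ∀ u : H, A₂ u ≤ A₁ u)
    (u₀ : H) (hu₀ : u₀ ≠ 0) (hNeh : ‖u₀‖ ^ 2 = A₂ u₀)
    (hmin : ‖u₀‖ ^ 2 / 2 - A₂ u₀ / p =
      sInf {c : ℝ | ∃ u : H, u ≠ 0 ∧ ‖u‖ ^ 2 = A₂ u ∧ c = ‖u‖ ^ 2 / 2 - A₂ u / p})
    (hstrict : A₂ u₀ < A₁ u₀) :
    sInf {c : ℝ | ∃ u : H, u ≠ 0 ∧ ‖u‖ ^ 2 = A₁ u ∧ c = ‖u‖ ^ 2 / 2 - A₁ u / p} <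
      sInf {c : ℝ | ∃ u : H, u ≠ 0 ∧ ‖u‖ ^ 2 = A₂ u ∧ c = ‖u‖ ^ 2 / 2 - A₂ u / p} := by
  have hp0 : (0:ℝ) < p := by linarith
  have hnorm : (0:ℝ) < ‖u₀‖ := norm_pos_iff.mpr hu₀
  have hA2pos : 0 < A₂ u₀ := by rw [← hNeh]; positivity
  have hA1pos : 0 < A₁ u₀ := lt_trans hA2pos hstrict
  have hratio : 0 < A₂ u₀ / A₁ u₀ := div_pos hA2pos hA1pos
  have hratio1 : A₂ u₀ / A₁ u₀ < 1 := (div_lt_one hA1pos).mpr hstrict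
  have hpm2 : (0:ℝ) < p - 2 := by linarith
  set t : ℝ := (A₂ u₀ / A₁ u₀) ^ (p - 2)⁻¹ with ht
  have htpos : 0 < t := Real.rpow_pos_of_pos hratio _
  have ht1 : t < 1 := by
    apply Real.rpow_lt_one hratio.le hratio1
    positivity
  have htkey : t ^ (p - 2) = A₂ u₀ / A₁ u₀ :=
    Real.rpow_inv_rpow hratio.le (ne_of_gt hpm2)
  have htp : t ^ p = t ^ (2:ℝ) * (A₂ u₀ / A₁ u₀) := by
    rw [← htkey, ← Real.rpow_add htpos]
    ring_nf
  have ht2 : t ^ (2:ℝ) = t ^ (2:ℕ) := by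
    rw [show (2:ℝ) = ((2:ℕ):ℝ) by norm_num, Real.rpow_natCast]
  -- candidate element of N₁
  set v : H := t • u₀ with hv
  have hvne : v ≠ 0 := smul_ne_zero (ne_of_gt htpos) hu₀
  have hnv : ‖v‖ ^ 2 = t ^ (2:ℕ) * ‖u₀‖ ^ 2 := by
    rw [hv, norm_smul, Real.norm_eq_abs, abs_of_pos htpos, mul_pow]
  have hA1v : A₁ v = t ^ (2:ℕ) * A₂ u₀ := by
    rw [hv, hom₁ t htpos.le, htp, ht2, mul_assoc,
      div_mul_eq_mul_div, mul_div_assoc, div_self (ne_of_gt hA1pos), mul_one]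
  have hvN : ‖v‖ ^ 2 = A₁ v := by rw [hnv, hA1v, hNeh]
  have hIv : ‖v‖ ^ 2 / 2 - A₁ v / p = t ^ (2:ℕ) * (‖u₀‖ ^ 2 / 2 - A₂ u₀ / p) := by
    rw [hnv, hA1v]; ring
  have hc2pos : 0 < ‖u₀‖ ^ 2 / 2 - A₂ u₀ / p := by
    rw [← hNeh]
    have h1 : ‖u₀‖ ^ 2 / p < ‖u₀‖ ^ 2 / 2 := by
      apply div_lt_div_of_pos_left (by positivity) (by norm_num) hp
    linarith
  have hlt : ‖v‖ ^ 2 / 2 - A₁ v / p < ‖u₀‖ ^ 2 / 2 - A₂ u₀ / p := by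
    rw [hIv]
    have ht2lt : t ^ (2:ℕ) < 1 := by
      calc t ^ (2:ℕ) < 1 ^ (2:ℕ) := by
            apply pow_lt_pow_left₀ ht1 htpos.le; norm_num
        _ = 1 := one_pow 2
    nlinarith
  have hbdd : BddBelow {c : ℝ | ∃ u : H, u ≠ 0 ∧ ‖u‖ ^ 2 = A₁ u ∧ c = ‖u‖ ^ 2 / 2 - A₁ u / p} := by
    refine ⟨0, fun c hc => ?_⟩
    obtain ⟨u, hu, hN, hc⟩ := hc
    rw [hc, ← hN]
    have h1 : ‖u‖ ^ 2 / p ≤ ‖u‖ ^ 2 / 2 := by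
      apply div_le_div_of_nonneg_left (by positivity) (by norm_num) (by linarith)
    linarith
  have hmem : (‖v‖ ^ 2 / 2 - A₁ v / p) ∈
      {c : ℝ | ∃ u : H, u ≠ 0 ∧ ‖u‖ ^ 2 = A₁ u ∧ c = ‖u‖ ^ 2 / 2 - A₁ u / p} :=
    ⟨v, hvne, hvN, rfl⟩
  calc sInf {c : ℝ | ∃ u : H, u ≠ 0 ∧ ‖u‖ ^ 2 = A₁ u ∧ c = ‖u‖ ^ 2 / 2 - A₁ u / p}
      ≤ ‖v‖ ^ 2 / 2 - A₁ v / p := csInf_le hbdd hmem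
    _ < ‖u₀‖ ^ 2 / 2 - A₂ u₀ / p := hlt
    _ = _ := hmin
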